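/- Let θ₂, θ₃, θ₂*, θ₃* > 0 and let 0 < ε < (θ₃*/θ₃)¹² · (θ₂*/θ₂). Then the function r ↦ g(r; θ₂*, θ₃*) − ε·|g(r; θ₂, θ₃)| on (0,∞) is lower regular. -/

import Mathlib

/-- The Lennard-Jones pair potential with parameters θ₂, θ₃. -/
noncomputable def gLJ (θ₂ θ₃ r : ℝ) : ℝ := 4 * θ₂ * ((θ₃ / r) ^ 12 - (θ₃ / r) ^ 6)


/-- A function `f` on `(0,∞)` is lower regular if it is bounded below by `-ψ` for
some positive nonincreasing function `ψ` with `∫₀^∞ r·ψ(r) dr < ∞`. -/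
def LowerRegular (f : ℝ → ℝ) : Prop :=
  ∃ ψ : ℝ → ℝ, (∀ r > (0 : ℝ), 0 < ψ r) ∧ AntitoneOn ψ (Set.Ioi 0) ∧
    MeasureTheory.IntegrableOn (fun r => r * ψ r) (Set.Ioi 0) ∧
    ∀ r > (0 : ℝ), -ψ r ≤ f r

theorem stmt4 (θ₂ θ₃ θ₂s θ₃s ε : ℝ) (h2 : 0 < θ₂) (h3 : 0 < θ₃)
    (h2s : 0 < θ₂s) (h3s : 0 < θ₃s)
    (hε0 : 0 < ε) (hε : ε < (θ₃s / θ₃) ^ 12 * (θ₂s / θ₂)) :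
    LowerRegular (fun r => gLJ θ₂s θ₃s r - ε * |gLJ θ₂ θ₃ r|) := by
  rw [div_pow, div_mul_div_comm, lt_div_iff₀ (by positivity)] at hε
  set c : ℝ := 4 * (θ₂s * θ₃s ^ 12 - ε * θ₂ * θ₃ ^ 12) with hc_def
  set a : ℝ := 4 * (θ₂s * θ₃s ^ 6 + ε * θ₂ * θ₃ ^ 6) with ha_def
  have hc : 0 < c := by
    have : ε * (θ₃ ^ 12 * θ₂) < θ₃s ^ 12 * θ₂s := hε
    nlinarith
  have ha : 0 < a := by positivity
  set M : ℝ := a ^ 2 / (4 * c) with hM_def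
  have hM : 0 < M := by positivity
  refine ⟨fun r => min M (a / r ^ 6), ?_, ?_, ?_, ?_⟩
  · intro r hr; exact lt_min hM (by positivity)
  · intro r hr s hs hrs
    have hr0 : (0:ℝ) < r := hr
    exact min_le_min le_rfl (div_le_div_of_nonneg_left ha.le (by positivity)
      (pow_le_pow_left₀ hr0.le hrs 6))
  · have h1 : Set.Ioc (0:ℝ) 1 ∪ Set.Ioi 1 = Set.Ioi 0 := Set.Ioc_union_Ioi_eq_Ioi zero_le_one
    rw [← h1]
    have hmeas : Measurable (fun r : ℝ => r * min M (a / r ^ 6)) :=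
      measurable_id.mul (measurable_const.min (measurable_const.div (measurable_id.pow_const 6)))
    apply MeasureTheory.IntegrableOn.union
    · apply MeasureTheory.Measure.integrableOn_of_bounded
        (measure_Ioc_lt_top).ne hmeas.aestronglyMeasurable (M := M)
      filter_upwards [MeasureTheory.ae_restrict_mem measurableSet_Ioc] with r hr
      rw [Real.norm_eq_abs, abs_mul, abs_of_pos hr.1,
        abs_of_pos (lt_min hM (div_pos ha (pow_pos hr.1 6)))]
      calc r * min M (a / r ^ 6) ≤ 1 * M := by
            apply mul_le_mul hr.2 (min_le_left _ _) (le_min hM.le (div_pos ha (pow_pos hr.1 6)).le) zero_le_one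
        _ = M := one_mul M
    · have hint : MeasureTheory.IntegrableOn (fun x : ℝ => a * x ^ (-5 : ℝ)) (Set.Ioi 1) :=
        (integrableOn_Ioi_rpow_of_lt (by norm_num) one_pos).const_mul a
      apply MeasureTheory.Integrable.mono hint (hmeas.aestronglyMeasurable.restrict)
      filter_upwards [MeasureTheory.ae_restrict_mem measurableSet_Ioi] with r hr
      have hr0 : (0:ℝ) < r := lt_trans one_pos hr
      rw [Real.norm_eq_abs, abs_mul, abs_of_pos hr0,
        abs_of_pos (lt_min hM (div_pos ha (pow_pos hr0 6))),
        Real.norm_eq_abs, abs_of_pos (by positivity)]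
      calc r * min M (a / r ^ 6) ≤ r * (a / r ^ 6) :=
            mul_le_mul_of_nonneg_left (min_le_right _ _) hr0.le
        _ = a * r ^ (-5 : ℝ) := by
            rw [Real.rpow_neg hr0.le, show ((5:ℝ)) = ((5:ℕ):ℝ) by norm_num,
              Real.rpow_natCast]
            field_simp
  · intro r hr
    have hg : |gLJ θ₂ θ₃ r| ≤ 4 * θ₂ * ((θ₃ / r) ^ 12 + (θ₃ / r) ^ 6) := by
      rw [gLJ, abs_mul, abs_of_pos (by positivity : (0:ℝ) < 4 * θ₂)]
      gcongr
      exact (abs_sub _ _).trans (by rw [abs_of_nonneg (by positivity), abs_of_nonneg (by positivity)])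
    have key : c / r ^ 12 - a / r ^ 6 ≤ gLJ θ₂s θ₃s r - ε * |gLJ θ₂ θ₃ r| := by
      have h1 : ε * |gLJ θ₂ θ₃ r| ≤ ε * (4 * θ₂ * ((θ₃ / r) ^ 12 + (θ₃ / r) ^ 6)) :=
        mul_le_mul_of_nonneg_left hg hε0.le
      have h2 : c / r ^ 12 - a / r ^ 6 =
          gLJ θ₂s θ₃s r - ε * (4 * θ₂ * ((θ₃ / r) ^ 12 + (θ₃ / r) ^ 6)) := by
        rw [gLJ, hc_def, ha_def]
        field_simp
        ring
      linarith
    refine le_trans ?_ key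
    rw [neg_le, neg_sub]
    calc a / r ^ 6 - c / r ^ 12 ≤ min M (a / r ^ 6) := by
          apply le_min
          · have h6 : (0:ℝ) < r ^ 6 := by positivity
            set y : ℝ := (r ^ 6)⁻¹ with hy_def
            have hy : 0 < y := by positivity
            have e : a / r ^ 6 - c / r ^ 12 = a * y - c * y ^ 2 := by
              rw [hy_def]; field_simp
            rw [e, hM_def, le_div_iff₀ (by positivity : (0:ℝ) < 4 * c)]
            nlinarith [sq_nonneg (2 * c * y - a)]
          · have : (0:ℝ) ≤ c / r ^ 12 := by positivity
            linarith
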